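/- For every almost disjoint family A of infinite subsets of ℕ, the hyperspace S_c(Ψ(A)) of nontrivial convergent sequences of the Isbell–Mrówka space Ψ(A), with the Vietoris topology, is a Baire space. -/

import Mathlib

open Set TopologicalSpace Filter

/-- The Vietoris topology on collections of subsets of `X`. -/
def vietoris (X : Type*) [TopologicalSpace X] : TopologicalSpace (Set X) :=
  TopologicalSpace.generateFrom
    ({t | ∃ U : Set X, IsOpen U ∧ t = {S : Set X | S ⊆ U}} ∪
     {t | ∃ U : Set X, IsOpen U ∧ t = {S : Set X | (S ∩ U).Nonempty}})

/-- The set `S` converges to `x`: `x ∈ S` and `S \ U` is finite for every open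
neighborhood `U` of `x`. -/
def ConvTo {X : Type*} [TopologicalSpace X] (S : Set X) (x : X) : Prop :=
  x ∈ S ∧ ∀ U : Set X, IsOpen U → x ∈ U → (S \ U).Finite

/-- `S` is a nontrivial convergent sequence in `X`: a countably infinite closed set with a
unique non-isolated point `x` (all other points are isolated in `S`), converging to `x`. -/
def IsNCS (X : Type*) [TopologicalSpace X] (S : Set X) : Prop :=
  S.Infinite ∧ S.Countable ∧ IsClosed S ∧ ∃ x : X, ConvTo S x ∧
    (∀ y ∈ S, y ≠ x → ∃ U : Set X, IsOpen U ∧ U ∩ S = {y}) ∧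
    ¬ ∃ U : Set X, IsOpen U ∧ U ∩ S = {x}

/-- The hyperspace of nontrivial convergent sequences of `X`. -/
def Sc (X : Type*) [TopologicalSpace X] : Type _ :=
  {S : Set X // IsNCS X S}

instance (X : Type*) [TopologicalSpace X] : TopologicalSpace (Sc X) :=
  TopologicalSpace.induced (fun S : Sc X => S.1) (vietoris X)


/-- The underlying set of the Isbell–Mrówka space `Ψ(A)`: `ℕ ∪ A`. -/
def PsiSpace (A : Set (Set ℕ)) : Type := ℕ ⊕ ↥A

/-- The topology of `Ψ(A)`: points of `ℕ` are isolated and basic neighborhoods of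
`a ∈ A` are the sets `(a \ F) ∪ {a}` with `F ⊆ ℕ` finite. -/
instance (A : Set (Set ℕ)) : TopologicalSpace (PsiSpace A) where
  IsOpen U := ∀ a : ↥A, Sum.inr a ∈ U → (a.1 \ {n : ℕ | Sum.inl n ∈ U}).Finite
  isOpen_univ := fun a _ => Set.finite_empty.subset fun n hn => hn.2 trivial
  isOpen_inter := fun U V hU hV a ha => by
    refine ((hU a ha.1).union (hV a ha.2)).subset fun n hn => ?_
    rcases Classical.em (Sum.inl n ∈ U) with h | h
    · exact Or.inr ⟨hn.1, fun hV' => hn.2 ⟨h, hV'⟩⟩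
    · exact Or.inl ⟨hn.1, h⟩
  isOpen_sUnion := fun s hs a ha => by
    obtain ⟨t, ht, hat⟩ := ha
    exact (hs t ht a hat).subset fun n hn =>
      ⟨hn.1, fun h => hn.2 ⟨t, ht, h⟩⟩

section ScBaire

variable {A : Set (Set ℕ)}

lemma psi_open_iff {U : Set (PsiSpace A)} :
    IsOpen U ↔ ∀ a : ↥A, Sum.inr a ∈ U → (a.1 \ {n : ℕ | Sum.inl n ∈ U}).Finite :=
  Iff.rfl

lemma isOpen_inl_singleton (n : ℕ) : IsOpen ({Sum.inl n} : Set (PsiSpace A)) := by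
  rw [psi_open_iff]
  intro a ha
  exact absurd (Set.mem_singleton_iff.mp ha) Sum.inr_ne_inl

/-- The canonical convergent sequence with limit `a` and trace `s` on `ℕ`. -/
def seqSet (a : ↥A) (s : Set ℕ) : Set (PsiSpace A) := Sum.inl '' s ∪ {Sum.inr a}

lemma inl_mem_seqSet {a : ↥A} {s : Set ℕ} {n : ℕ} : Sum.inl n ∈ seqSet a s ↔ n ∈ s := by
  constructor
  · rintro (⟨m, hm, hmn⟩ | h)
    · rwa [← Sum.inl_injective hmn]
    · exact absurd (Set.mem_singleton_iff.mp h) Sum.inl_ne_inr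
  · intro h; exact Or.inl ⟨n, h, rfl⟩

lemma inr_mem_seqSet {a b : ↥A} {s : Set ℕ} : Sum.inr b ∈ seqSet a s ↔ b = a := by
  constructor
  · rintro (⟨m, hm, hmn⟩ | h)
    · exact absurd hmn Sum.inl_ne_inr
    · exact Sum.inr_injective (Set.mem_singleton_iff.mp h)
  · rintro rfl; exact Or.inr rfl

lemma seqSet_mono {a : ↥A} {s t : Set ℕ} (h : s ⊆ t) : seqSet a s ⊆ seqSet a t :=
  union_subset_union_left _ (image_mono h)

lemma isOpen_seqSet {a : ↥A} {u : Set ℕ} (hu : (a.1 \ u).Finite) :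
    IsOpen (seqSet a u) := by
  rw [psi_open_iff]
  intro b hb
  rw [inr_mem_seqSet] at hb
  subst hb
  exact hu.subset fun n hn => ⟨hn.1, fun h => hn.2 (inl_mem_seqSet.mpr h)⟩

lemma good_ncs (had : ∀ a ∈ A, ∀ b ∈ A, a ≠ b → (a ∩ b).Finite)
    {a : ↥A} {s : Set ℕ} (hs : s.Infinite) (hsa : (s \ a.1).Finite) :
    IsNCS (PsiSpace A) (seqSet a s) := by
  have hinj : Function.Injective (Sum.inl : ℕ → PsiSpace A) := Sum.inl_injective
  refine ⟨((hs.image (hinj.injOn)).mono subset_union_left), ?_, ?_,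
    Sum.inr a, ⟨Or.inr rfl, ?_⟩, ?_, ?_⟩
  · exact ((s.to_countable.image _).union (countable_singleton _))
  · -- closed
    rw [← isOpen_compl_iff, psi_open_iff]
    intro b hb
    have hba : b ≠ a := by
      intro h; exact hb (inr_mem_seqSet.mpr h)
    have hba' : b.1 ≠ a.1 := fun h => hba (Subtype.coe_injective h)
    have h1 : (b.1 ∩ a.1).Finite := had b.1 b.2 a.1 a.2 hba'
    refine ((h1.union hsa).subset ?_)
    intro n hn
    have hns : n ∈ s := by
      have := hn.2
      simp only [mem_setOf_eq, mem_compl_iff, not_not] at this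
      by_contra hc
      exact this (Set.mem_compl fun h => hc (inl_mem_seqSet.mp h))
    by_cases hna : n ∈ a.1
    · exact Or.inl ⟨hn.1, hna⟩
    · exact Or.inr ⟨hns, hna⟩
  · -- convergence
    intro U hU hxU
    have hfin := psi_open_iff.mp hU a hxU
    have : seqSet a s \ U ⊆ Sum.inl '' ((s \ a.1) ∪ (a.1 \ {n | Sum.inl n ∈ U})) := by
      rintro z ⟨hz1, hz2⟩
      rcases hz1 with ⟨n, hn, rfl⟩ | hz
      · refine ⟨n, ?_, rfl⟩
        by_cases hna : n ∈ a.1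
        · exact Or.inr ⟨hna, hz2⟩
        · exact Or.inl ⟨hn, hna⟩
      · exact absurd (show z = Sum.inr a from hz) (by rintro rfl; exact hz2 hxU)
    exact ((hsa.union hfin).image _).subset this
  · -- isolated points
    rintro y hy hne
    rcases hy with ⟨n, hn, rfl⟩ | hy
    · exact ⟨{Sum.inl n}, isOpen_inl_singleton n,
        inter_eq_left.mpr (singleton_subset_iff.mpr (inl_mem_seqSet.mpr hn))⟩
    · exact absurd hy hne
  · -- the limit is not isolated
    rintro ⟨U, hU, hUS⟩
    have hxU : Sum.inr a ∈ U ∩ seqSet a s := hUS ▸ rfl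
    have hfin := psi_open_iff.mp hU a hxU.1
    have hinf : (s \ (s \ a.1)).Infinite := hs.diff hsa
    obtain ⟨n, hn1, hn2⟩ := (hinf.diff hfin).nonempty
    have hna : n ∈ a.1 := by
      rcases hn1 with ⟨hns, hns2⟩
      by_contra h
      exact hns2 ⟨hns, h⟩
    have hnU : Sum.inl n ∈ U := by
      by_contra h
      exact hn2 ⟨hna, h⟩
    have : Sum.inl n ∈ U ∩ seqSet a s := ⟨hnU, inl_mem_seqSet.mpr hn1.1⟩
    rw [hUS] at this
    exact Sum.inl_ne_inr (Set.mem_singleton_iff.mp this)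





lemma exists_inr_mem {T : Set (PsiSpace A)} (h : IsNCS (PsiSpace A) T) :
    ∃ a : ↥A, Sum.inr a ∈ T := by
  obtain ⟨-, -, -, x, hconv, -, hniso⟩ := h
  obtain n | b := x
  · exact absurd ⟨{Sum.inl n}, isOpen_inl_singleton n,
      inter_eq_left.mpr (singleton_subset_iff.mpr hconv.1)⟩ hniso
  · exact ⟨b, hconv.1⟩

/-- Structure of elements of the hyperspace contained in a tube. -/
lemma sc_subset_struct (T : Sc (PsiSpace A)) {a : ↥A} {u : Set ℕ}
    (h : T.1 ⊆ seqSet a u) :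
    T.1 = seqSet a {n | Sum.inl n ∈ T.1} ∧ {n | Sum.inl n ∈ T.1} ⊆ u := by
  obtain ⟨b, hb⟩ := exists_inr_mem T.2
  have hba : b = a := inr_mem_seqSet.mp (h hb)
  subst hba
  constructor
  · ext z
    constructor
    · intro hz
      rcases h hz with ⟨n, hn, rfl⟩ | hz'
      · exact Or.inl ⟨n, hz, rfl⟩
      · exact Or.inr hz'
    · rintro (⟨n, hn, rfl⟩ | hz')
      · exact hn
      · rw [show z = Sum.inr b from hz']; exact hb
  · intro n hn
    rcases h hn with ⟨m, hm, hmn⟩ | h'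
    · rwa [← Sum.inl_injective hmn]
    · exact absurd (show Sum.inl n = Sum.inr b from h') (by simp)

/-- Basic open tubes in the hyperspace. -/
def OO (a : ↥A) (F u : Set ℕ) : Set (Sc (PsiSpace A)) :=
  {T | (∀ n ∈ F, Sum.inl n ∈ T.1) ∧ T.1 ⊆ seqSet a u}

lemma isOpen_OO {a : ↥A} {F u : Set ℕ} (hF : F.Finite) (hu : (a.1 \ u).Finite) :
    IsOpen (OO a F u) := by
  have h1 : @IsOpen _ (vietoris (PsiSpace A))
      {S : Set (PsiSpace A) | S ⊆ seqSet a u} :=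
    TopologicalSpace.GenerateOpen.basic _ (Or.inl ⟨seqSet a u, isOpen_seqSet hu, rfl⟩)
  have h2 : @IsOpen _ (vietoris (PsiSpace A))
      (⋂ n ∈ F, {S : Set (PsiSpace A) | (S ∩ {Sum.inl n}).Nonempty}) := by
    refine @Set.Finite.isOpen_biInter _ _ (vietoris (PsiSpace A)) _ _ hF ?_
    intro n _
    exact TopologicalSpace.GenerateOpen.basic _
      (Or.inr ⟨{Sum.inl n}, isOpen_inl_singleton n, rfl⟩)
  have hVo := @IsOpen.inter _ (vietoris (PsiSpace A)) _ _ h1 h2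
  refine ⟨_, hVo, ?_⟩
  ext T
  simp only [OO, mem_preimage, mem_inter_iff, mem_setOf_eq, mem_iInter,
    Set.inter_singleton_nonempty]
  exact and_comm.trans (and_congr_left' (forall₂_congr fun n _ => Set.inter_singleton_nonempty))

lemma basisLemma (hmemA : ∀ a ∈ A, a.Infinite) {W : Set (Sc (PsiSpace A))}
    (hW : IsOpen W) (S : Sc (PsiSpace A)) (hSW : S ∈ W) (a : ↥A) (ha : Sum.inr a ∈ S.1) :
    ∃ F u : Set ℕ, F.Finite ∧ F ⊆ u ∧ (a.1 \ u).Finite ∧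
      ∀ s' : Set ℕ, F ⊆ s' → s' ⊆ u →
        ∀ h : IsNCS (PsiSpace A) (seqSet a s'), (⟨seqSet a s', h⟩ : Sc (PsiSpace A)) ∈ W := by
  classical
  obtain ⟨V, hV, hVW⟩ : ∃ V, @IsOpen _ (vietoris (PsiSpace A)) V ∧
      (fun T : Sc (PsiSpace A) => T.1) ⁻¹' V = W := hW
  have hSV : S.1 ∈ V := by rw [← hVW] at hSW; exact hSW
  have hbasis := @TopologicalSpace.isTopologicalBasis_of_subbasis _ (vietoris (PsiSpace A))
    ({t | ∃ U : Set (PsiSpace A), IsOpen U ∧ t = {S : Set (PsiSpace A) | S ⊆ U}} ∪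
     {t | ∃ U : Set (PsiSpace A), IsOpen U ∧ t = {S : Set (PsiSpace A) | (S ∩ U).Nonempty}}) rfl
  obtain ⟨v, hvB, hSv', hvV⟩ :=
    @TopologicalSpace.IsTopologicalBasis.exists_subset_of_mem_open _ (vietoris (PsiSpace A))
      _ hbasis _ _ hSV hV
  obtain ⟨f, ⟨hffin, hfsub⟩, rfl⟩ := hvB
  have hSv : ∀ t ∈ f, S.1 ∈ t := mem_sInter.mp hSv'
  -- witnesses for the two kinds of subbasic sets
  set gU : Set (Set (PsiSpace A)) → Set (PsiSpace A) := fun t =>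
    if h : ∃ U : Set (PsiSpace A), IsOpen U ∧ t = {S : Set (PsiSpace A) | S ⊆ U} then h.choose
    else if h2 : ∃ U : Set (PsiSpace A), IsOpen U ∧
        t = {S : Set (PsiSpace A) | (S ∩ U).Nonempty} then h2.choose
    else ∅ with hgU
  have hdspec : ∀ t, (∃ U : Set (PsiSpace A), IsOpen U ∧ t = {S : Set (PsiSpace A) | S ⊆ U}) →
      IsOpen (gU t) ∧ t = {S : Set (PsiSpace A) | S ⊆ gU t} := by
    intro t h
    have hs := h.choose_spec
    simp only [hgU, dif_pos h]
    exact hs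
  set fd := {t ∈ f | ∃ U : Set (PsiSpace A), IsOpen U ∧ t = {S : Set (PsiSpace A) | S ⊆ U}}
    with hfd
  have hfdf : fd ⊆ f := sep_subset _ _
  have hhit : ∀ t ∈ f \ fd, IsOpen (gU t) ∧
      t = {S : Set (PsiSpace A) | (S ∩ gU t).Nonempty} := by
    intro t ht
    have hnd : ¬(∃ U : Set (PsiSpace A), IsOpen U ∧ t = {S : Set (PsiSpace A) | S ⊆ U}) :=
      fun h => ht.2 ⟨ht.1, h⟩
    have hh : ∃ U : Set (PsiSpace A), IsOpen U ∧
        t = {S : Set (PsiSpace A) | (S ∩ U).Nonempty} := (hfsub ht.1).resolve_left hnd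
    have hs := hh.choose_spec
    simp only [hgU, dif_neg hnd, dif_pos hh]
    exact hs
  set U0 := ⋂ t ∈ fd, gU t with hU0
  have hU0open : IsOpen U0 :=
    Set.Finite.isOpen_biInter (hffin.subset hfdf) (fun t ht => (hdspec t ht.2).1)
  have hSU0 : S.1 ⊆ U0 := by
    refine subset_iInter₂ fun t ht => ?_
    have h1 : S.1 ∈ t := hSv t ht.1
    rw [(hdspec t ht.2).2] at h1
    exact h1
  set u := {n : ℕ | Sum.inl n ∈ U0} with hu
  have haufin : (a.1 \ u).Finite := psi_open_iff.mp hU0open a (hSU0 ha)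
  have hresolve : ∀ t, ∃ n : ℕ, t ∈ f \ fd → (n ∈ u ∧ Sum.inl n ∈ gU t) := by
    intro t
    by_cases ht : t ∈ f \ fd
    · have h1 : S.1 ∈ t := hSv t ht.1
      rw [(hhit t ht).2] at h1
      obtain ⟨p, hp1, hp2⟩ := h1
      obtain m | b := p
      · exact ⟨m, fun _ => ⟨hSU0 hp1, hp2⟩⟩
      · have hb1 : (b.1 \ {n | Sum.inl n ∈ gU t}).Finite :=
          psi_open_iff.mp (hhit t ht).1 b hp2
        have hb2 : (b.1 \ u).Finite := psi_open_iff.mp hU0open b (hSU0 hp1)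
        obtain ⟨n, hn1, hn2⟩ := ((hmemA b.1 b.2).diff (hb1.union hb2)).nonempty
        have hnu : n ∈ u := by
          by_contra hc; exact hn2 (Or.inr ⟨hn1, hc⟩)
        have hng : Sum.inl n ∈ gU t := by
          by_contra hc; exact hn2 (Or.inl ⟨hn1, hc⟩)
        exact ⟨n, fun _ => ⟨hnu, hng⟩⟩
    · exact ⟨0, fun h => absurd h ht⟩
  refine ⟨(fun t => (hresolve t).choose) '' (f \ fd), u,
    (hffin.subset diff_subset).image _, ?_, haufin, ?_⟩
  · rintro _ ⟨t, ht, rfl⟩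
    exact ((hresolve t).choose_spec ht).1
  · intro s' hFs' hs'u h
    have hseq : seqSet a s' ⊆ U0 := by
      rintro z (⟨n, hn, rfl⟩ | hz')
      · exact hs'u hn
      · rw [show z = Sum.inr a from hz']; exact hSU0 ha
    have hsf : seqSet a s' ∈ ⋂₀ f := by
      rw [mem_sInter]
      intro t ht
      by_cases htd : t ∈ fd
      · rw [(hdspec t htd.2).2]
        exact hseq.trans (biInter_subset_of_mem htd)
      · have ht' : t ∈ f \ fd := ⟨ht, htd⟩
        rw [(hhit t ht').2]
        exact ⟨Sum.inl ((hresolve t).choose),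
          Or.inl ⟨_, hFs' ⟨t, ht', rfl⟩, rfl⟩, ((hresolve t).choose_spec ht').2⟩
    rw [← hVW]
    exact hvV hsf
lemma inter_infinite {a : ↥A} (hmemA : ∀ a ∈ A, a.Infinite) {u v : Set ℕ}
    (hu : (a.1 \ u).Finite) (hv : (a.1 \ v).Finite) : (a.1 ∩ (u ∩ v)).Infinite := by
  have h1 : (a.1 \ ((a.1 \ u) ∪ (a.1 \ v))).Infinite :=
    (hmemA a.1 a.2).diff (hu.union hv)
  refine h1.mono fun n hn => ?_
  have hnu : n ∈ u := by by_contra hc; exact hn.2 (Or.inl ⟨hn.1, hc⟩)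
  have hnv : n ∈ v := by by_contra hc; exact hn.2 (Or.inr ⟨hn.1, hc⟩)
  exact ⟨hn.1, hnu, hnv⟩

lemma stepLemma (hmemA : ∀ a ∈ A, a.Infinite)
    (had : ∀ a ∈ A, ∀ b ∈ A, a ≠ b → (a ∩ b).Finite)
    {a : ↥A} {D : Set (Sc (PsiSpace A))}
    (hD : IsOpen D) (hDd : Dense D) {F u : Set ℕ}
    (hF : F.Finite) (hFu : F ⊆ u) (hau : (a.1 \ u).Finite) :
    ∃ F' u' : Set ℕ, F'.Finite ∧ F ⊆ F' ∧ (∃ m ∈ F', m ∉ F) ∧ F' ⊆ u' ∧ u' ⊆ u ∧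
      (a.1 \ u').Finite ∧ OO a F' u' ⊆ D ∩ OO a F u := by
  classical
  have hauinf : (a.1 ∩ u).Infinite := by
    have := inter_infinite hmemA hau hau
    rwa [inter_self] at this
  -- the canonical element of `OO a F u`
  have hcanon : ∀ {u₁ F₁ : Set ℕ}, F₁.Finite → (a.1 ∩ u₁).Infinite →
      IsNCS (PsiSpace A) (seqSet a (F₁ ∪ a.1 ∩ u₁)) := by
    intro u₁ F₁ hF₁ hinf
    refine good_ncs had (hinf.mono subset_union_right) (hF₁.subset ?_)
    rintro n ⟨hn1 | hn1, hn2⟩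
    · exact hn1
    · exact absurd hn1.1 hn2
  have hOOopen : IsOpen (OO a F u) := isOpen_OO hF hau
  have hOOne : (OO a F u).Nonempty := by
    refine ⟨⟨seqSet a (F ∪ a.1 ∩ u), hcanon hF hauinf⟩, fun n hn => ?_, ?_⟩
    · exact inl_mem_seqSet.mpr (Or.inl hn)
    · exact seqSet_mono (union_subset hFu (inter_subset_right))
  obtain ⟨S, hSD⟩ := hDd.inter_open_nonempty _ hOOopen hOOne
  have hSOO : S ∈ OO a F u := hSD.1
  have hSDmem : S ∈ D ∩ OO a F u := ⟨hSD.2, hSD.1⟩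
  obtain ⟨hstruct, htu⟩ := sc_subset_struct S hSOO.2
  have haS : Sum.inr a ∈ S.1 := by rw [hstruct]; exact Or.inr rfl
  obtain ⟨F₁, u₁, hF₁fin, hF₁u₁, hau₁, hkey⟩ :=
    basisLemma hmemA (hD.inter (isOpen_OO hF hau)) S hSDmem a haS
  -- a canonical element of the refined tube lies in `OO a F u`
  have hsinf₁ : (a.1 ∩ u₁).Infinite := by
    have := inter_infinite hmemA hau₁ hau₁
    rwa [inter_self] at this
  have hstar := hkey (F₁ ∪ a.1 ∩ u₁) subset_union_left
    (union_subset hF₁u₁ inter_subset_right) (hcanon hF₁fin hsinf₁)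
  have hstarOO : (⟨seqSet a (F₁ ∪ a.1 ∩ u₁), hcanon hF₁fin hsinf₁⟩ : Sc (PsiSpace A)) ∈
      OO a F u := hstar.2
  have hFsub : F ⊆ F₁ ∪ a.1 ∩ u₁ := fun n hn => inl_mem_seqSet.mp (hstarOO.1 n hn)
  have hFu₁ : F ⊆ u₁ := hFsub.trans (union_subset hF₁u₁ inter_subset_right)
  have hF₁usub : F₁ ∪ a.1 ∩ u₁ ⊆ u := by
    intro n hn
    have : Sum.inl n ∈ seqSet a u := hstarOO.2 (inl_mem_seqSet.mpr hn)
    exact inl_mem_seqSet.mp this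
  have hF₁u : F₁ ⊆ u := subset_union_left.trans hF₁usub
  obtain ⟨m, hm1, hm2⟩ := ((inter_infinite hmemA hau hau₁).diff (hF.union hF₁fin)).nonempty
  refine ⟨insert m (F ∪ F₁), insert m (F ∪ F₁) ∪ a.1 ∩ (u ∩ u₁), (hF.union hF₁fin).insert m,
    (subset_union_left.trans (subset_insert _ _)), ⟨m, mem_insert _ _, fun hc => hm2 (Or.inl hc)⟩,
    subset_union_left, ?_, ?_, ?_⟩
  · -- u' ⊆ u
    refine union_subset (insert_subset hm1.2.1 (union_subset hFu hF₁u)) ?_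
    exact fun n hn => hn.2.1
  · -- a \ u' finite
    refine ((hau.union hau₁).subset ?_)
    rintro n ⟨hn1, hn2⟩
    by_cases hnu : n ∈ u
    · by_cases hnu₁ : n ∈ u₁
      · exact absurd (Or.inr ⟨hn1, hnu, hnu₁⟩) hn2
      · exact Or.inr ⟨hn1, hnu₁⟩
    · exact Or.inl ⟨hn1, hnu⟩
  · -- OO a F' u' ⊆ D ∩ OO a F u
    have hu'u₁ : insert m (F ∪ F₁) ∪ a.1 ∩ (u ∩ u₁) ⊆ u₁ := by
      refine union_subset (insert_subset hm1.2.2 (union_subset hFu₁ hF₁u₁)) ?_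
      exact fun n hn => hn.2.2
    intro T hT
    obtain ⟨hTstruct, hTu⟩ := sc_subset_struct T hT.2
    set t := {n : ℕ | Sum.inl n ∈ T.1} with htdef
    have hF₁t : F₁ ⊆ t := by
      intro n hn
      exact hT.1 n (Set.mem_insert_of_mem _ (Or.inr hn))
    have htu₁ : t ⊆ u₁ := hTu.trans hu'u₁
    have hTncs : IsNCS (PsiSpace A) (seqSet a t) := hTstruct ▸ T.2
    have := hkey t hF₁t htu₁ hTncs
    have hTeq : (⟨seqSet a t, hTncs⟩ : Sc (PsiSpace A)) = T := Subtype.ext hTstruct.symm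
    rwa [hTeq] at this
lemma union_infinite {G : ℕ → Set ℕ} (hfin : ∀ n, (G n).Finite)
    (hmono : ∀ n, G n ⊆ G (n + 1)) (hstrict : ∀ n, ∃ m ∈ G (n + 1), m ∉ G n) :
    (⋃ n, G n).Infinite := by
  have hcard : ∀ n, n ≤ (G n).ncard := by
    intro n
    induction n with
    | zero => simp
    | succ k ih =>
      have hlt : (G k).ncard < (G (k + 1)).ncard := by
        refine Set.ncard_lt_ncard ?_ (hfin (k + 1))
        rw [Set.ssubset_iff_of_subset (hmono k)]
        exact hstrict k
      omega
  intro hc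
  have hle : ∀ n, (G n).ncard ≤ (⋃ n, G n).ncard :=
    fun n => Set.ncard_le_ncard (subset_iUnion G n) hc
  have h1 := hcard ((⋃ n, G n).ncard + 1)
  have h2 := hle ((⋃ n, G n).ncard + 1)
  omega

end ScBaire

/-- For every almost disjoint family `A` of infinite subsets of `ℕ`, the
hyperspace `S_c(Ψ(A))` is a Baire space. -/
theorem stmt16 (A : Set (Set ℕ)) (hinf : A.Infinite)
    (hmem : ∀ a ∈ A, a.Infinite)
    (had : ∀ a ∈ A, ∀ b ∈ A, a ≠ b → (a ∩ b).Finite) :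
    BaireSpace (Sc (PsiSpace A)) := by
  classical
  refine ⟨fun Df hDo hDd => ?_⟩
  rw [dense_iff_inter_open]
  intro W hW hWne
  obtain ⟨S₀, hS₀⟩ := hWne
  obtain ⟨a, ha⟩ := exists_inr_mem S₀.2
  obtain ⟨Fr, ur, hFrfin, hFrur, haur, hkey⟩ := basisLemma hmem hW S₀ hS₀ a ha
  set u0 := Fr ∪ a.1 ∩ ur with hu0
  have hau0 : (a.1 \ u0).Finite := by
    refine haur.subset fun n hn => ⟨hn.1, fun h => hn.2 (Or.inr ⟨hn.1, h⟩)⟩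
  have hOO0W : OO a Fr u0 ⊆ W := by
    intro T hT
    obtain ⟨hTs, hTu⟩ := sc_subset_struct T hT.2
    have hFt : Fr ⊆ {n | Sum.inl n ∈ T.1} := fun n hn => hT.1 n hn
    have htur : {n | Sum.inl n ∈ T.1} ⊆ ur :=
      hTu.trans (union_subset hFrur inter_subset_right)
    have hncs : IsNCS (PsiSpace A) (seqSet a {n | Sum.inl n ∈ T.1}) := hTs ▸ T.2
    have hmem' := hkey _ hFt htur hncs
    have hTeq : (⟨seqSet a {n | Sum.inl n ∈ T.1}, hncs⟩ : Sc (PsiSpace A)) = T :=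
      Subtype.ext hTs.symm
    rwa [hTeq] at hmem'
  set Inv : Set ℕ × Set ℕ → Prop :=
    fun p => p.1.Finite ∧ p.1 ⊆ p.2 ∧ (a.1 \ p.2).Finite with hInv
  have hInv0 : Inv (Fr, u0) := ⟨hFrfin, subset_union_left, hau0⟩
  have hstep : ∀ (n : ℕ) (p : Set ℕ × Set ℕ), Inv p →
      ∃ q : Set ℕ × Set ℕ, Inv q ∧ p.1 ⊆ q.1 ∧ (∃ m ∈ q.1, m ∉ p.1) ∧ q.2 ⊆ p.2 ∧
        OO a q.1 q.2 ⊆ Df n ∩ OO a p.1 p.2 := by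
    intro n p hp
    obtain ⟨F', u', h1, h2, h3, h4, h5, h6, h7⟩ :=
      stepLemma hmem had (hDo n) (hDd n) hp.1 hp.2.1 hp.2.2
    exact ⟨(F', u'), ⟨h1, h4, h6⟩, h2, h3, h5, h7⟩
  let seq : ℕ → {p : Set ℕ × Set ℕ // Inv p} := fun n =>
    Nat.rec ⟨(Fr, u0), hInv0⟩
      (fun k ih => ⟨(hstep k ih.1 ih.2).choose, (hstep k ih.1 ih.2).choose_spec.1⟩) n
  have hspec : ∀ n, (seq n).1.1 ⊆ (seq (n + 1)).1.1 ∧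
      (∃ m ∈ (seq (n + 1)).1.1, m ∉ (seq n).1.1) ∧ (seq (n + 1)).1.2 ⊆ (seq n).1.2 ∧
      OO a (seq (n + 1)).1.1 (seq (n + 1)).1.2 ⊆ Df n ∩ OO a (seq n).1.1 (seq n).1.2 := by
    intro n
    have h := (hstep n (seq n).1 (seq n).2).choose_spec
    exact ⟨h.2.1, h.2.2.1, h.2.2.2.1, h.2.2.2.2⟩
  have hFmono : ∀ m n, m ≤ n → (seq m).1.1 ⊆ (seq n).1.1 := by
    intro m n h
    induction h with
    | refl => exact subset_rfl
    | step h ih => exact ih.trans (hspec _).1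
  have humono : ∀ m n, m ≤ n → (seq n).1.2 ⊆ (seq m).1.2 := by
    intro m n h
    induction h with
    | refl => exact subset_rfl
    | step h ih => exact ((hspec _).2.2.1).trans ih
  set s := ⋃ n, (seq n).1.1 with hs
  have hsinf : s.Infinite :=
    union_infinite (fun n => (seq n).2.1) (fun n => (hspec n).1) (fun n => (hspec n).2.1)
  have hssub : ∀ n, s ⊆ (seq n).1.2 := by
    intro n
    refine iUnion_subset fun m => ?_
    rcases le_total m n with h | h
    · exact (hFmono m n h).trans (seq n).2.2.1
    · exact ((seq m).2.2.1).trans (humono n m h)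
  have hsu0 : s ⊆ u0 := hssub 0
  have hsa : (s \ a.1).Finite := by
    refine hFrfin.subset fun n hn => ?_
    rcases hsu0 hn.1 with h | h
    · exact h
    · exact absurd h.1 hn.2
  have hncs : IsNCS (PsiSpace A) (seqSet a s) := good_ncs had hsinf hsa
  have hmemOO : ∀ n, (⟨seqSet a s, hncs⟩ : Sc (PsiSpace A)) ∈
      OO a (seq n).1.1 (seq n).1.2 := by
    intro n
    exact ⟨fun k hk => inl_mem_seqSet.mpr (mem_iUnion.mpr ⟨n, hk⟩), seqSet_mono (hssub n)⟩
  refine ⟨⟨seqSet a s, hncs⟩, hOO0W (hmemOO 0), ?_⟩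
  refine Set.mem_iInter.mpr ?_
  intro n
  exact ((hspec n).2.2.2 (hmemOO (n + 1))).1
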